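/- Let R be a finite valuation ring with parameters q and ℓ, and let ψ be a nontrivial additive character of R and χ a nontrivial multiplicative character of R^×. If ψ and χ have the same valuation k (k smallest with ψ trivial on (π^k), respectively χ trivial on 1+(π^k)), then the Gauss sum G(ψ,χ) = Σ_{u ∈ R^×} ψ(u)χ(u) has absolute value q^{ℓ - k/2}. -/

import Mathlib

open Finset

/-- Card of a finite group is card of range times card of kernel. -/
lemma aux_card_range_mul_ker {G H : Type*} [AddCommGroup G] [AddCommGroup H] [Finite G]
    (f : G →+ H) : Nat.card G = Nat.card f.range * Nat.card f.ker := by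
  rw [AddSubgroup.card_eq_card_quotient_mul_card_addSubgroup f.ker]
  congr 1
  exact Nat.card_congr (QuotientAddGroup.quotientKerEquivRange f).toEquiv

/-- Fiberwise summation along an additive hom. -/
lemma aux_sum_comp {G H : Type*} [AddCommGroup G] [AddCommGroup H] [Fintype G] [Fintype H]
    [DecidableEq H] (f : G →+ H) (g : H → ℂ) :
    ∑ y : G, g (f y) = (Nat.card f.ker : ℂ) *
      ∑ x ∈ Finset.univ.filter (fun x => x ∈ f.range), g x := by
  classical
  have hker : ∀ b : H, b ∈ f.range →
      (Finset.univ.filter fun y : G => f y = b).card = Nat.card f.ker := by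
    rintro b ⟨y₀, rfl⟩
    have : Nat.card f.ker = (Finset.univ.filter fun y : G => f y = 0).card := by
      rw [Nat.card_eq_fintype_card]
      rw [← Fintype.card_subtype]
      apply Fintype.card_congr
      exact Equiv.subtypeEquivRight (fun x => f.mem_ker)
    rw [this]
    apply Finset.card_bij' (fun y _ => y - y₀) (fun y _ => y + y₀)
    · intro a ha
      simp only [mem_filter, mem_univ, true_and] at ha ⊢
      simp [map_sub, ha]
    · intro a ha
      simp only [mem_filter, mem_univ, true_and] at ha ⊢
      simp [map_add, ha]
    · intros; simp
    · intros; simp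
  calc ∑ y : G, g (f y)
      = ∑ b : H, ∑ y ∈ Finset.univ.filter fun y => f y = b, g (f y) := by
        rw [Finset.sum_fiberwise_of_maps_to (fun y _ => Finset.mem_univ (f y))]
    _ = ∑ b : H, ((Finset.univ.filter fun y : G => f y = b).card : ℂ) * g b := by
        refine Finset.sum_congr rfl fun b _ => ?_
        rw [Finset.sum_congr rfl (fun y hy => by
          rw [(Finset.mem_filter.mp hy).2]), Finset.sum_const, nsmul_eq_mul]
    _ = ∑ b ∈ Finset.univ.filter (fun x => x ∈ f.range), (Nat.card f.ker : ℂ) * g b := by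
        rw [Finset.sum_filter]
        refine Finset.sum_congr rfl fun b _ => ?_
        by_cases hb : b ∈ f.range
        · rw [if_pos hb, hker b hb]
        · rw [if_neg hb]
          have : (Finset.univ.filter fun y : G => f y = b) = ∅ := by
            ext y; simp only [mem_filter, mem_univ, true_and, Finset.notMem_empty, iff_false]
            exact fun h => hb ⟨y, h⟩
          rw [this]; simp
    _ = _ := by rw [Finset.mul_sum]

set_option linter.unusedSectionVars false
set_option linter.unusedVariables false


section Aux
variable {R : Type*} [CommRing R] [Fintype R] [DecidableEq R] [IsLocalRing R]

-- basic structural lemmas for a finite chain ring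
lemma aux_pow_zero_iff (π : R) (ℓ : ℕ) (hℓpos : 0 < ℓ) (hnil : π ^ ℓ = 0)
    (hmin : ∀ m, 0 < m → m < ℓ → π ^ m ≠ 0) (m : ℕ) : π ^ m = 0 ↔ ℓ ≤ m := by
  constructor
  · intro h
    by_contra hlt
    push_neg at hlt
    rcases Nat.eq_zero_or_pos m with hm | hm
    · subst hm
      rw [pow_zero] at h
      exact absurd h one_ne_zero
    · exact hmin m hm hlt h
  · intro h
    calc π ^ m = π ^ ℓ * π ^ (m - ℓ) := by rw [← pow_add]; congr 1; omega
    _ = 0 := by rw [hnil, zero_mul]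

lemma aux_unit_pow (π : R) (hπ : IsLocalRing.maximalIdeal R = Ideal.span {π})
    (ℓ : ℕ) (hnil : π ^ ℓ = 0) (x : R) : ∃ m, m ≤ ℓ ∧ ∃ u : Rˣ, x = π ^ m * u := by
  have key : ∀ t : ℕ, ∀ x : R, x ∈ Ideal.span {π ^ (ℓ - t)} →
      ∃ m, m ≤ ℓ ∧ ∃ u : Rˣ, x = π ^ m * u := by
    intro t
    induction t with
    | zero =>
      intro x hx
      simp only [Nat.sub_zero] at hx
      rw [Ideal.mem_span_singleton] at hx
      obtain ⟨c, rfl⟩ := hx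
      exact ⟨ℓ, le_rfl, 1, by simp [hnil]⟩
    | succ t ih =>
      intro x hx
      rw [Ideal.mem_span_singleton] at hx
      obtain ⟨c, rfl⟩ := hx
      by_cases hc : IsUnit c
      · exact ⟨ℓ - (t+1), Nat.sub_le _ _, hc.unit, by simp⟩
      · have : c ∈ Ideal.span {π} := by
          rw [← hπ]
          exact hc
        rw [Ideal.mem_span_singleton] at this
        obtain ⟨d, rfl⟩ := this
        apply ih
        rw [Ideal.mem_span_singleton]
        have : π ^ (ℓ - t) ∣ π ^ (ℓ - (t+1)) * π := by
          rw [← pow_succ]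
          exact pow_dvd_pow π (by omega)
        rw [← mul_assoc]
        exact Dvd.dvd.mul_right this d
  apply key ℓ
  rw [Ideal.mem_span_singleton, Nat.sub_self, pow_zero]
  exact one_dvd x

lemma aux_span_anti (π : R) {a b : ℕ} (h : a ≤ b) :
    Ideal.span {π ^ b} ≤ Ideal.span {π ^ a} :=
  Ideal.span_singleton_le_span_singleton.mpr (pow_dvd_pow π h)

lemma aux_mem_pow_iff (π : R) (hπ : IsLocalRing.maximalIdeal R = Ideal.span {π})
    (ℓ : ℕ) (hℓpos : 0 < ℓ) (hnil : π ^ ℓ = 0)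
    (hmin : ∀ m, 0 < m → m < ℓ → π ^ m ≠ 0) {j : ℕ} (hj : j ≤ ℓ) (m : ℕ) :
    π ^ m ∈ Ideal.span {π ^ j} ↔ j ≤ m ∨ ℓ ≤ m := by
  constructor
  · intro h
    by_contra hc
    push_neg at hc
    obtain ⟨hmj, hmℓ⟩ := hc
    rw [Ideal.mem_span_singleton] at h
    obtain ⟨c, hc⟩ := h
    have h0 : π ^ m * (1 - π ^ (j - m) * c) = 0 := by
      have : π ^ j * c = π ^ m * (π ^ (j - m) * c) := by
        rw [← mul_assoc, ← pow_add]
        congr 2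
        omega
      rw [mul_sub, mul_one, ← this, ← hc, sub_self]
    have hu : IsUnit (1 - π ^ (j - m) * c) := by
      apply IsLocalRing.isUnit_one_sub_self_of_mem_nonunits
      rw [← IsLocalRing.mem_maximalIdeal, hπ, Ideal.mem_span_singleton]
      refine Dvd.dvd.mul_right ?_ c
      exact dvd_pow_self π (by omega)
    have : π ^ m = 0 := by
      obtain ⟨u, hu⟩ := hu
      have := congrArg (fun z => z * (↑u⁻¹ : R)) h0
      simp only [zero_mul, mul_assoc, ← hu] at this
      rw [Units.mul_inv, mul_one] at this
      exact this
    rw [aux_pow_zero_iff π ℓ hℓpos hnil hmin] at this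
    omega
  · intro h
    rw [Ideal.mem_span_singleton]
    rcases h with h | h
    · exact pow_dvd_pow π h
    · have : π ^ m = 0 := (aux_pow_zero_iff π ℓ hℓpos hnil hmin m).mpr h
      rw [this]
      exact dvd_zero _


lemma aux_ann (π : R) (hπ : IsLocalRing.maximalIdeal R = Ideal.span {π})
    (ℓ : ℕ) (hℓpos : 0 < ℓ) (hnil : π ^ ℓ = 0)
    (hmin : ∀ m, 0 < m → m < ℓ → π ^ m ≠ 0) {j : ℕ} (hj : j ≤ ℓ) (x : R)
    (hx : π ^ j * x = 0) : x ∈ Ideal.span {π ^ (ℓ - j)} := by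
  obtain ⟨m, hm, u, rfl⟩ := aux_unit_pow π hπ ℓ hnil x
  have h0 : π ^ (j + m) * (u : R) = 0 := by
    rw [pow_add, mul_assoc]
    exact hx
  have h1 : π ^ (j + m) = 0 := by
    have := congrArg (fun z => z * ((u⁻¹ : Rˣ) : R)) h0
    simpa [mul_assoc] using this
  rw [aux_pow_zero_iff π ℓ hℓpos hnil hmin] at h1
  rw [Ideal.mem_span_singleton]
  exact Dvd.dvd.mul_right (pow_dvd_pow π (by omega)) _

lemma aux_cards (π : R) (hπ : IsLocalRing.maximalIdeal R = Ideal.span {π})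
    (ℓ : ℕ) (hℓpos : 0 < ℓ) (hnil : π ^ ℓ = 0)
    (hmin : ∀ m, 0 < m → m < ℓ → π ^ m ≠ 0) (q : ℕ)
    (hq : Nat.card (IsLocalRing.ResidueField R) = q) :
    Nat.card R = q ^ ℓ ∧ ∀ j ≤ ℓ, Nat.card (Ideal.span {π ^ j}) = q ^ (ℓ - j) := by
  classical
  have hq1 : Nat.card (R ⧸ Ideal.span {π ^ 1}) = q := by
    rw [pow_one, ← hπ]
    exact hq
  have hc1pos : 0 < Nat.card (Ideal.span {π ^ 1}) := Nat.card_pos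
  have hR1 : ∀ J : Ideal R, Nat.card R = Nat.card (R ⧸ J) * Nat.card J := fun J => by
    rw [Submodule.card_eq_card_quotient_mul_card J, Nat.mul_comm]
  -- quotient cardinalities by induction
  have hQ : ∀ j, j ≤ ℓ → Nat.card (R ⧸ Ideal.span {π ^ j}) = q ^ j := by
    intro j
    induction j with
    | zero =>
      intro _
      have htop : Ideal.span {π ^ 0} = (⊤ : Ideal R) := by
        rw [pow_zero, Ideal.span_singleton_one]
      rw [htop, pow_zero]
      rw [Nat.card_eq_one_iff_unique]
      constructor
      · constructor
        intro a b
        obtain ⟨x, rfl⟩ := Ideal.Quotient.mk_surjective a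
        obtain ⟨y, rfl⟩ := Ideal.Quotient.mk_surjective b
        exact Ideal.Quotient.eq.mpr trivial
      · infer_instance
    | succ j ih =>
      intro hj1
      have hj : j ≤ ℓ := by omega
      have hle : Ideal.span {π ^ (j+1)} ≤ Ideal.span {π ^ j} := aux_span_anti π (by omega)
      set v := Ideal.Quotient.factor hle with hv
      set f := v.toAddMonoidHom with hf
      have hcard := aux_card_range_mul_ker f
      have hrange : Nat.card f.range = Nat.card (R ⧸ Ideal.span {π ^ j}) := by
        have : f.range = ⊤ := by
          rw [AddMonoidHom.range_eq_top]
          intro y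
          obtain ⟨w, rfl⟩ := Ideal.Quotient.mk_surjective y
          exact ⟨Ideal.Quotient.mk _ w, Ideal.Quotient.factor_mk hle w⟩
        rw [this]
        exact Nat.card_congr AddSubgroup.topEquiv.toEquiv
      -- the kernel of v has cardinality q
      have hker : Nat.card f.ker = q := by
        set s := (Ideal.Quotient.mk (Ideal.span {π ^ (j+1)})).toAddMonoidHom.comp
          (AddMonoidHom.mulLeft (π ^ j)) with hs
        have hsval : ∀ x : R, s x = Ideal.Quotient.mk (Ideal.span {π ^ (j+1)}) (π ^ j * x) :=
          fun x => rfl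
        have hfval : ∀ w : R, f (Ideal.Quotient.mk (Ideal.span {π ^ (j+1)}) w) =
            Ideal.Quotient.mk (Ideal.span {π ^ j}) w :=
          fun w => Ideal.Quotient.factor_mk hle w
        have hsrange : s.range = f.ker := by
          ext y
          constructor
          · rintro ⟨x, rfl⟩
            rw [AddMonoidHom.mem_ker, hsval, hfval, Ideal.Quotient.eq_zero_iff_mem,
              Ideal.mem_span_singleton]
            exact Dvd.dvd.mul_right dvd_rfl x
          · intro hy
            obtain ⟨w, rfl⟩ := Ideal.Quotient.mk_surjective y
            rw [AddMonoidHom.mem_ker, hfval, Ideal.Quotient.eq_zero_iff_mem,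
              Ideal.mem_span_singleton] at hy
            obtain ⟨c, hc⟩ := hy
            exact ⟨c, by rw [hsval, ← hc]⟩
        have hsker : Nat.card s.ker = Nat.card (Ideal.span {π ^ 1}) := by
          have : s.ker = (Ideal.span {π ^ 1}).toAddSubgroup := by
            ext x
            rw [AddMonoidHom.mem_ker, hsval, Ideal.Quotient.eq_zero_iff_mem,
              Ideal.mem_span_singleton, Submodule.mem_toAddSubgroup,
              Ideal.mem_span_singleton, pow_one]
            constructor
            · rintro ⟨c, hc⟩
              have h0 : π ^ j * (x - π * c) = 0 := by
                rw [mul_sub, hc]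
                ring
              have := aux_ann π hπ ℓ hℓpos hnil hmin hj _ h0
              rw [Ideal.mem_span_singleton] at this
              obtain ⟨d, hd⟩ := this
              have : x = π * c + π ^ (ℓ - j) * d := by
                rw [← hd]; ring
              rw [this]
              refine dvd_add ⟨c, rfl⟩ (Dvd.dvd.mul_right ?_ d)
              exact dvd_pow_self π (by omega)
            · rintro ⟨c, rfl⟩
              exact ⟨c, by ring⟩
          rw [this]
          exact Nat.card_congr (Equiv.subtypeEquivRight fun x => Iff.rfl)
        have h1 : Nat.card R = Nat.card f.ker * Nat.card (Ideal.span {π ^ 1}) := by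
          rw [aux_card_range_mul_ker s, hsrange, hsker]
        have h2 : Nat.card R = q * Nat.card (Ideal.span {π ^ 1}) := by
          rw [hR1 (Ideal.span {π ^ 1}), hq1]
        exact Nat.eq_of_mul_eq_mul_right hc1pos (h1.symm.trans h2)
      rw [hcard, hrange, hker, ih hj, pow_succ]
  have hbot : Nat.card (Ideal.span {π ^ ℓ}) = 1 := by
    have : Ideal.span {π ^ ℓ} = (⊥ : Ideal R) := by
      rw [hnil, Ideal.span_singleton_eq_bot]
    rw [this]
    rw [Nat.card_eq_one_iff_unique]
    exact ⟨⟨fun a b => Subtype.ext (by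
      have ha : (a : R) = 0 := (Submodule.mem_bot R).mp a.2
      have hb : (b : R) = 0 := (Submodule.mem_bot R).mp b.2
      rw [ha, hb])⟩, ⟨0⟩⟩
  have hN : Nat.card R = q ^ ℓ := by
    rw [hR1 (Ideal.span {π ^ ℓ}), hbot, hQ ℓ le_rfl, mul_one]
  refine ⟨hN, fun j hj => ?_⟩
  have h1 : q ^ ℓ = q ^ j * Nat.card (Ideal.span {π ^ j}) := by
    rw [← hN, hR1 (Ideal.span {π ^ j}), hQ j hj]
  have hqpos : 0 < q := by
    rw [← hq1]
    exact Nat.card_pos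
  have h2 : q ^ ℓ = q ^ j * q ^ (ℓ - j) := by
    rw [← pow_add]
    congr 1
    omega
  rw [h2] at h1
  exact (Nat.eq_of_mul_eq_mul_left (Nat.pow_pos (n := j) hqpos) h1.symm)

end Aux

theorem abs_gauss_sum_finite_valuation_ring
    (R : Type*) [CommRing R] [Fintype R] [DecidableEq R] [IsLocalRing R]
    [IsPrincipalIdealRing R]
    (π : R) (hπ : IsLocalRing.maximalIdeal R = Ideal.span {π})
    (q ℓ : ℕ) (hq : Nat.card (IsLocalRing.ResidueField R) = q) (hqodd : Odd q)
    (hℓpos : 0 < ℓ) (hnil : π ^ ℓ = 0) (hmin : ∀ m, 0 < m → m < ℓ → π ^ m ≠ 0)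
    (ψ : AddChar R ℂ) (χ : Rˣ →* ℂ) (hψ : ψ ≠ 1) (hχ : χ ≠ 1) (k : ℕ)
    (hψtriv : ∀ x ∈ Ideal.span {π ^ k}, ψ x = 1)
    (hψmin : ∀ j < k, ∃ x ∈ Ideal.span {π ^ j}, ψ x ≠ 1)
    (hχtriv : ∀ u : Rˣ, (u : R) - 1 ∈ Ideal.span {π ^ k} → χ u = 1)
    (hχmin : ∀ j < k, ∃ u : Rˣ, (u : R) - 1 ∈ Ideal.span {π ^ j} ∧ χ u ≠ 1) :
    ‖∑ u : Rˣ, ψ (u : R) * χ u‖ = (q : ℝ) ^ ((ℓ : ℝ) - (k : ℝ) / 2) := by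
  classical
  -- k is between 1 and ℓ
  have hk1 : 1 ≤ k := by
    by_contra h
    push_neg at h
    interval_cases k
    apply hψ
    ext x
    rw [AddChar.one_apply]
    apply hψtriv
    rw [pow_zero, Ideal.span_singleton_one]
    trivial
  have hkl : k ≤ ℓ := by
    by_contra h
    push_neg at h
    obtain ⟨x, hx, hne⟩ := hψmin ℓ h
    rw [hnil, Ideal.span_singleton_eq_bot.mpr rfl, Submodule.mem_bot] at hx
    subst hx
    exact hne (AddChar.map_zero_eq_one ψ)
  obtain ⟨hN, hcardI⟩ := aux_cards π hπ ℓ hℓpos hnil hmin q hq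
  have hqpos : 0 < q := by
    by_contra h
    push_neg at h
    interval_cases q
    rw [Nat.zero_pow hℓpos] at hN
    have := Nat.card_pos (α := R)
    omega
  -- unit-power membership criterion
  have hmemu : ∀ (m : ℕ) (u : Rˣ) (j : ℕ), j ≤ ℓ →
      ((π ^ m * u : R) ∈ Ideal.span {π ^ j} ↔ j ≤ m ∨ ℓ ≤ m) := by
    intro m u j hj
    rw [← aux_mem_pow_iff π hπ ℓ hℓpos hnil hmin hj m]
    constructor
    · intro h
      have := Ideal.mul_mem_right ((u⁻¹ : Rˣ) : R) _ h
      rwa [mul_assoc, Units.mul_inv, mul_one] at this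
    · intro h
      exact Ideal.mul_mem_right _ _ h
  -- the full additive character sum
  have hF1 : ∀ a : R, a ∈ Ideal.span {π ^ k} → (∑ x : R, ψ (a * x)) = (q : ℂ) ^ ℓ := by
    intro a ha
    have : ∀ x : R, ψ (a * x) = 1 := fun x => hψtriv _ (Ideal.mul_mem_right x _ ha)
    simp only [this, Finset.sum_const, Finset.card_univ, nsmul_eq_mul, mul_one]
    rw [← Nat.card_eq_fintype_card, hN]
    push_cast
    ring
  have hF0 : ∀ a : R, a ∉ Ideal.span {π ^ k} → (∑ x : R, ψ (a * x)) = 0 := by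
    intro a ha
    have hne : ψ.mulShift a ≠ 1 := by
      obtain ⟨m, hm, u, rfl⟩ := aux_unit_pow π hπ ℓ hnil a
      rw [hmemu m u k hkl] at ha
      push_neg at ha
      obtain ⟨hmk, hml⟩ := ha
      obtain ⟨x, hx, hxne⟩ := hψmin (k - 1) (by omega)
      have hx' : x ∈ Ideal.span {π ^ m} := aux_span_anti π (by omega) hx
      rw [Ideal.mem_span_singleton] at hx'
      obtain ⟨c, rfl⟩ := hx'
      intro h
      apply hxne
      have := DFunLike.congr_fun h (((u⁻¹ : Rˣ) : R) * c)
      rw [AddChar.mulShift_apply, AddChar.one_apply] at this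
      rwa [mul_assoc, ← mul_assoc (u : R), Units.mul_inv, one_mul] at this
    calc ∑ x : R, ψ (a * x) = ∑ x : R, ψ.mulShift a x := by
          simp [AddChar.mulShift_apply]
      _ = 0 := AddChar.sum_eq_zero_of_ne_one hne
  -- multiplication by π as additive hom
  set Φ : R →+ R := AddMonoidHom.mulLeft π with hΦdef
  have hΦapp : ∀ y : R, Φ y = π * y := fun y => rfl
  have hΦrange : Φ.range = (Ideal.span {π ^ 1}).toAddSubgroup := by
    ext x
    simp only [AddMonoidHom.mem_range, Submodule.mem_toAddSubgroup, Ideal.mem_span_singleton,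
      pow_one]
    constructor
    · rintro ⟨y, rfl⟩
      exact ⟨y, rfl⟩
    · rintro ⟨y, rfl⟩
      exact ⟨y, rfl⟩
  have hΦker : Nat.card Φ.ker = q := by
    have hkk : Φ.ker = (Ideal.span {π ^ (ℓ - 1)}).toAddSubgroup := by
      ext x
      simp only [AddMonoidHom.mem_ker, Submodule.mem_toAddSubgroup]
      constructor
      · intro h
        have h1 : π ^ 1 * x = 0 := by rw [pow_one]; exact h
        have := aux_ann π hπ ℓ hℓpos hnil hmin hℓpos x h1
        exact this
      · intro h
        rw [Ideal.mem_span_singleton] at h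
        obtain ⟨c, rfl⟩ := h
        rw [hΦapp, ← mul_assoc, ← pow_succ']
        rw [show ℓ - 1 + 1 = ℓ by omega, hnil, zero_mul]
    rw [hkk]
    rw [Nat.card_congr (Equiv.subtypeEquivRight (fun x => Iff.rfl) :
      {x : R // x ∈ (Ideal.span {π ^ (ℓ-1)}).toAddSubgroup} ≃ {x : R // x ∈ Ideal.span {π ^ (ℓ-1)}})]
    rw [hcardI (ℓ-1) (by omega), show ℓ - (ℓ-1) = 1 by omega, pow_one]
  -- the key membership shift
  have hstepmem : ∀ a : R, a * π ∈ Ideal.span {π ^ k} ↔ a ∈ Ideal.span {π ^ (k-1)} := by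
    intro a
    obtain ⟨m, hm, u, rfl⟩ := aux_unit_pow π hπ ℓ hnil a
    have h1 : (π ^ m * (u : R)) * π = π ^ (m+1) * u := by ring
    rw [h1, hmemu (m+1) u k hkl, hmemu m u (k-1) (by omega)]
    omega
  -- the sum over the maximal ideal
  have hM : ∀ a : R, (q : ℂ) *
      (∑ x ∈ Finset.univ.filter (fun x : R => x ∈ Ideal.span {π ^ 1}), ψ (a * x)) =
      (if a ∈ Ideal.span {π ^ (k - 1)} then ((q:ℂ) ^ ℓ) else 0) := by
    intro a
    have hcomp := aux_sum_comp Φ (fun x => ψ (a * x))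
    have hfilter : Finset.univ.filter (fun x : R => x ∈ Φ.range) =
        Finset.univ.filter (fun x : R => x ∈ Ideal.span {π ^ 1}) := by
      apply Finset.filter_congr
      intro x _
      rw [hΦrange]
      simp [Submodule.mem_toAddSubgroup]
    rw [hΦker, hfilter] at hcomp
    have hlhs : ∑ y : R, ψ (a * Φ y) = ∑ y : R, ψ ((a * π) * y) := by
      apply Finset.sum_congr rfl
      intro y _
      rw [hΦapp]
      congr 1
      ring
    rw [hlhs] at hcomp
    by_cases hmem : a ∈ Ideal.span {π ^ (k-1)}
    · rw [if_pos hmem, ← hcomp, hF1 _ ((hstepmem a).mpr hmem)]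
    · rw [if_neg hmem, ← hcomp, hF0 _ (fun hc => hmem ((hstepmem a).mp hc))]
  -- sum over units as complement of the maximal ideal
  have hunits : ∀ a : R, (∑ v : Rˣ, ψ (a * v)) =
      (∑ x : R, ψ (a * x)) -
      ∑ x ∈ Finset.univ.filter (fun x : R => x ∈ Ideal.span {π ^ 1}), ψ (a * x) := by
    intro a
    rw [eq_sub_iff_add_eq, add_comm, ← Finset.sum_filter_add_sum_filter_not Finset.univ
      (fun x : R => x ∈ Ideal.span {π ^ 1}) (fun x => ψ (a * x))]
    congr 1
    have himg : Finset.univ.filter (fun x : R => ¬ x ∈ Ideal.span {π ^ 1}) =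
        Finset.univ.image (fun v : Rˣ => (v : R)) := by
      ext x
      simp only [Finset.mem_filter, Finset.mem_univ, true_and, Finset.mem_image]
      rw [pow_one, ← hπ]
      constructor
      · intro h
        have : IsUnit x := by
          by_contra hc
          exact h (IsLocalRing.mem_maximalIdeal x |>.mpr hc)
        obtain ⟨u, rfl⟩ := this
        exact ⟨u, rfl⟩
      · rintro ⟨u, rfl⟩
        intro hc
        rw [IsLocalRing.mem_maximalIdeal] at hc
        exact hc u.isUnit
    rw [himg, Finset.sum_image (fun x _ y _ h => Units.ext h)]
  -- the unit character sum
  have hT : ∀ a : R, (q:ℂ) * ∑ v : Rˣ, ψ (a * v) =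
      (if a ∈ Ideal.span {π ^ k} then (q:ℂ)^(ℓ+1) else 0)
      - (if a ∈ Ideal.span {π ^ (k-1)} then (q:ℂ)^ℓ else 0) := by
    intro a
    rw [hunits a, mul_sub, hM a]
    congr 1
    by_cases hmem : a ∈ Ideal.span {π ^ k}
    · rw [if_pos hmem, hF1 a hmem, pow_succ]
      ring
    · rw [if_neg hmem, hF0 a hmem, mul_zero]
  -- conjugation facts
  have hψconj : ∀ x : R, (starRingEnd ℂ) (ψ x) = ψ (-x) := by
    intro x
    have hpow : ψ x ^ Fintype.card R = 1 := by
      rw [← AddChar.map_nsmul_eq_pow, card_nsmul_eq_zero, AddChar.map_zero_eq_one]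
    have hnorm : ‖ψ x‖ = 1 := Complex.norm_eq_one_of_pow_eq_one hpow Fintype.card_ne_zero
    rw [← Complex.inv_eq_conj hnorm]
    exact (AddChar.map_neg_eq_inv ψ x).symm
  have hχconj : ∀ u : Rˣ, (starRingEnd ℂ) (χ u) = χ u⁻¹ := by
    intro u
    have hpow : χ u ^ Fintype.card Rˣ = 1 := by
      rw [← map_pow, pow_card_eq_one, map_one]
    have hnorm : ‖χ u‖ = 1 := Complex.norm_eq_one_of_pow_eq_one hpow Fintype.card_ne_zero
    rw [← Complex.inv_eq_conj hnorm]
    refine inv_eq_of_mul_eq_one_right ?_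
    rw [← map_mul, mul_inv_cancel, map_one]
  set G := ∑ u : Rˣ, ψ (u : R) * χ u with hGdef
  have hGconj : (starRingEnd ℂ) G = ∑ v : Rˣ, ψ (-(v:R)) * χ v⁻¹ := by
    rw [hGdef, map_sum]
    exact Finset.sum_congr rfl fun v _ => by rw [map_mul, hψconj, hχconj]
  have hGG : G * (starRingEnd ℂ) G = ∑ t : Rˣ, χ t * ∑ v : Rˣ, ψ (((t:R) - 1) * v) := by
    rw [hGconj, hGdef, Finset.sum_mul_sum]
    rw [Finset.sum_comm]
    have key : ∀ v : Rˣ, ∑ u : Rˣ, (ψ (u:R) * χ u) * (ψ (-(v:R)) * χ v⁻¹)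
        = ∑ t : Rˣ, χ t * ψ (((t:R) - 1) * (v:R)) := by
      intro v
      refine (Fintype.sum_equiv (Equiv.mulRight v)
        (fun t => χ t * ψ (((t:R) - 1) * (v:R)))
        (fun u => (ψ (u:R) * χ u) * (ψ (-(v:R)) * χ v⁻¹)) ?_).symm
      intro t
      simp only [Equiv.coe_mulRight]
      have h2 : χ (t * v) * χ v⁻¹ = χ t := by
        rw [← map_mul, mul_assoc, mul_inv_cancel, mul_one]
      have h3 : ψ (((t * v : Rˣ) : R)) * ψ (-(v:R)) = ψ (((t:R) - 1) * v) := by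
        rw [← AddChar.map_add_eq_mul, Units.val_mul]
        congr 1
        ring
      rw [← h2, ← h3]
      ring
    rw [Finset.sum_congr rfl (fun v _ => key v), Finset.sum_comm]
    refine Finset.sum_congr rfl fun t _ => ?_
    rw [Finset.mul_sum]
  -- the two filtered character sums
  have hSk : ∑ t ∈ Finset.univ.filter (fun t : Rˣ => (t:R) - 1 ∈ Ideal.span {π ^ k}), χ t
      = ((q ^ (ℓ - k) : ℕ) : ℂ) := by
    rw [Finset.sum_congr rfl (fun t ht => hχtriv t (Finset.mem_filter.mp ht).2)]
    rw [Finset.sum_const, nsmul_eq_mul, mul_one]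
    congr 1
    rw [← hcardI k hkl, Nat.card_eq_fintype_card, Fintype.card_subtype]
    apply Finset.card_bij (fun (t : Rˣ) _ => (t : R) - 1)
    · intro t ht
      simp only [Finset.mem_filter, Finset.mem_univ, true_and]
      exact (Finset.mem_filter.mp ht).2
    · intro t _ s _ h
      exact Units.ext (by linear_combination h)
    · intro x hx
      have hx' : x ∈ Ideal.span {π ^ k} := (Finset.mem_filter.mp hx).2
      have hnu : -x ∈ nonunits R := by
        rw [← IsLocalRing.mem_maximalIdeal, hπ]
        have hx1 : x ∈ Ideal.span {π} := by
          have := aux_span_anti π hk1 hx'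
          rwa [pow_one] at this
        exact neg_mem hx1
      have hu := IsLocalRing.isUnit_one_sub_self_of_mem_nonunits _ hnu
      rw [sub_neg_eq_add] at hu
      obtain ⟨u, hu⟩ := hu
      refine ⟨u, Finset.mem_filter.mpr ⟨Finset.mem_univ u, ?_⟩, by rw [hu]; ring⟩
      rw [hu]
      rwa [add_sub_cancel_left]
  have hSk1 : ∑ t ∈ Finset.univ.filter
      (fun t : Rˣ => (t:R) - 1 ∈ Ideal.span {π ^ (k-1)}), χ t = 0 := by
    obtain ⟨u₀, hu₀mem, hu₀ne⟩ := hχmin (k-1) (by omega)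
    have hinv : ((u₀⁻¹ : Rˣ) : R) - 1 ∈ Ideal.span {π ^ (k-1)} := by
      have hid : ((u₀⁻¹ : Rˣ) : R) - 1 = -((u₀⁻¹ : Rˣ) : R) * (((u₀ : Rˣ) : R) - 1) := by
        have h := Units.inv_mul u₀
        linear_combination h
      rw [hid]
      exact Ideal.mul_mem_left _ _ hu₀mem
    have hmulmem : ∀ (w t : Rˣ), ((w : Rˣ) : R) - 1 ∈ Ideal.span {π ^ (k-1)} →
        (t:R) - 1 ∈ Ideal.span {π ^ (k-1)} →
        ((w * t : Rˣ) : R) - 1 ∈ Ideal.span {π ^ (k-1)} := by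
      intro w t hw ht
      have hid : ((w * t : Rˣ) : R) - 1 = (w : R) * ((t:R) - 1) + ((w:R) - 1) := by
        rw [Units.val_mul]
        ring
      rw [hid]
      exact Ideal.add_mem _ (Ideal.mul_mem_left _ _ ht) hw
    set S := Finset.univ.filter (fun t : Rˣ => (t:R) - 1 ∈ Ideal.span {π ^ (k-1)}) with hS
    have hkey : χ u₀ * ∑ t ∈ S, χ t = ∑ t ∈ S, χ t := by
      rw [Finset.mul_sum]
      have h1 : ∀ t ∈ S, χ u₀ * χ t = χ (u₀ * t) := fun t _ => (map_mul χ u₀ t).symm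
      rw [Finset.sum_congr rfl h1]
      apply Finset.sum_bij' (fun (t : Rˣ) _ => u₀ * t) (fun (t : Rˣ) _ => u₀⁻¹ * t)
      · intro t ht
        simp only [hS, Finset.mem_filter, Finset.mem_univ, true_and] at ht ⊢
        exact hmulmem u₀ t hu₀mem ht
      · intro t ht
        simp only [hS, Finset.mem_filter, Finset.mem_univ, true_and] at ht ⊢
        exact hmulmem u₀⁻¹ t hinv ht
      · intro t ht
        rw [inv_mul_cancel_left]
      · intro t ht
        rw [mul_inv_cancel_left]
      · intro t ht
        rfl
    have h2 : (χ u₀ - 1) * ∑ t ∈ S, χ t = 0 := by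
      rw [sub_mul, one_mul, hkey, sub_self]
    rcases mul_eq_zero.mp h2 with h | h
    · exact absurd (by linear_combination h : χ u₀ = 1) hu₀ne
    · exact h
  -- assemble
  have hq0 : (q : ℂ) ≠ 0 := by
    exact_mod_cast hqpos.ne'
  have hGGval : G * (starRingEnd ℂ) G = (q:ℂ) ^ (2*ℓ - k) := by
    apply mul_left_cancel₀ hq0
    rw [hGG, Finset.mul_sum]
    have hterm : ∀ t : Rˣ, (q:ℂ) * (χ t * ∑ v : Rˣ, ψ (((t:R) - 1) * v)) =
        χ t * ((if (t:R) - 1 ∈ Ideal.span {π ^ k} then (q:ℂ)^(ℓ+1) else 0)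
          - (if (t:R) - 1 ∈ Ideal.span {π ^ (k-1)} then (q:ℂ)^ℓ else 0)) := by
      intro t
      rw [← hT ((t:R) - 1)]
      ring
    rw [Finset.sum_congr rfl (fun t _ => hterm t)]
    have hexp : ∀ t : Rˣ, χ t * ((if (t:R) - 1 ∈ Ideal.span {π ^ k} then (q:ℂ)^(ℓ+1) else 0)
          - (if (t:R) - 1 ∈ Ideal.span {π ^ (k-1)} then (q:ℂ)^ℓ else 0)) =
        (if (t:R) - 1 ∈ Ideal.span {π ^ k} then χ t * (q:ℂ)^(ℓ+1) else 0)
          - (if (t:R) - 1 ∈ Ideal.span {π ^ (k-1)} then χ t * (q:ℂ)^ℓ else 0) := by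
      intro t
      by_cases h1 : (t:R) - 1 ∈ Ideal.span {π ^ k} <;>
        by_cases h2 : (t:R) - 1 ∈ Ideal.span {π ^ (k-1)} <;>
        simp [h1, h2] <;> ring
    rw [Finset.sum_congr rfl (fun t _ => hexp t), Finset.sum_sub_distrib]
    rw [← Finset.sum_filter, ← Finset.sum_filter]
    rw [← Finset.sum_mul, ← Finset.sum_mul, hSk, hSk1, zero_mul, sub_zero]
    push_cast
    rw [← pow_add, ← pow_succ']
    congr 1
    omega
  -- take absolute values
  have habs2 : ‖G‖ ^ 2 = (q:ℝ) ^ (2*ℓ - k) := by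
    have h1 : ((‖G‖ ^ 2 : ℝ) : ℂ) = (((q:ℝ) ^ (2*ℓ - k) : ℝ) : ℂ) :=
      calc ((‖G‖ ^ 2 : ℝ) : ℂ)
          = ((Complex.normSq G : ℝ) : ℂ) := by rw [Complex.sq_norm]
        _ = G * (starRingEnd ℂ) G := (Complex.mul_conj G).symm
        _ = (q:ℂ) ^ (2*ℓ - k) := hGGval
        _ = (((q:ℝ) ^ (2*ℓ - k) : ℝ) : ℂ) := by push_cast; ring
    exact_mod_cast h1
  have hrhs : ((q:ℝ) ^ ((ℓ:ℝ) - (k:ℝ)/2)) ^ 2 = (q:ℝ) ^ (2*ℓ - k) := by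
    have hqR : (0:ℝ) ≤ (q:ℝ) := by positivity
    rw [← Real.rpow_natCast ((q:ℝ) ^ ((ℓ:ℝ) - (k:ℝ)/2)) 2, ← Real.rpow_mul hqR]
    rw [← Real.rpow_natCast (q:ℝ) (2*ℓ - k)]
    congr 1
    rw [Nat.cast_sub (by omega : k ≤ 2*ℓ)]
    push_cast
    ring
  have hnn1 : 0 ≤ ‖G‖ := norm_nonneg G
  have hnn2 : 0 ≤ (q:ℝ) ^ ((ℓ:ℝ) - (k:ℝ)/2) := Real.rpow_nonneg (by positivity) _
  calc ‖G‖ = Real.sqrt (‖G‖ ^ 2) := (Real.sqrt_sq hnn1).symm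
    _ = Real.sqrt (((q:ℝ) ^ ((ℓ:ℝ) - (k:ℝ)/2)) ^ 2) := by rw [habs2, hrhs]
    _ = (q:ℝ) ^ ((ℓ:ℝ) - (k:ℝ)/2) := Real.sqrt_sq hnn2
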